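/- Let C : ℤ → U(2) satisfy the standing Assumption and let U = S∘C. Let ψ ∈ ℋ be compactly supported with ‖ψ‖_ℋ = 1. Then there exist constants c₊, c₋ ≥ 0 with c₊ + c₋ = 1 such that for every ε ∈ (0,1): Σ_{x∈ℤ, |x| ≤ (1−ε)n} ‖U^n ψ(x)‖²_{ℂ²} → 0, Σ_{x∈ℤ, x ≥ (1−ε)n} ‖U^n ψ(x)‖²_{ℂ²} → c₊, and Σ_{x∈ℤ, x ≤ −(1−ε)n} ‖U^n ψ(x)‖²_{ℂ²} → c₋, as n → +∞. (Equivalently, X_n/n converges weakly to the distribution c₋δ_{−1} + c₊δ_{+1}, where X_n is the random variable with ℙ(X_n = x) = ‖U^n ψ(x)‖²_{ℂ²}.) -/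

import Mathlib

noncomputable section

open scoped ComplexConjugate

/-- A state: a map ℤ → ℂ², components `ψ x 0` (left, ψ^L) and `ψ x 1` (right, ψ^R). -/
abbrev QWState := ℤ → Fin 2 → ℂ

/-- The quantum walk operator U = S∘C acting pointwise:
`(Uψ)(x) = ((C(x+1)ψ(x+1))₁, (C(x−1)ψ(x−1))₂)`. -/
def qwalk (C : ℤ → Matrix (Fin 2) (Fin 2) ℂ) (ψ : QWState) : QWState :=
  fun x => ![(C (x + 1)).mulVec (ψ (x + 1)) 0, (C (x - 1)).mulVec (ψ (x - 1)) 1]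

/-- The standing Assumption on the coin. -/
structure CoinAssumption (C : ℤ → Matrix (Fin 2) (Fin 2) ℂ) : Prop where
  unitary : ∀ x, C x ∈ Matrix.unitaryGroup (Fin 2) ℂ
  d11 : ∀ x, C x 0 0 ≠ 0
  d22 : ∀ x, C x 1 1 ≠ 0
  fin : Set.Finite {x : ℤ | C x ≠ 1}

/-- Outgoing: ψ^L vanishes far right, ψ^R vanishes far left. -/
def Outgoing (ψ : QWState) : Prop :=
  ∃ r : ℤ, 0 < r ∧ ∀ x : ℤ, r < x → ψ x 0 = 0 ∧ ψ (-x) 1 = 0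

open Filter

namespace QW
variable (C : ℤ → Matrix (Fin 2) (Fin 2) ℂ)

lemma qwalk0 (φ : QWState) (x : ℤ) : qwalk C φ x 0 = (C (x+1)).mulVec (φ (x+1)) 0 := rfl
lemma qwalk1 (φ : QWState) (x : ℤ) : qwalk C φ x 1 = (C (x-1)).mulVec (φ (x-1)) 1 := rfl

lemma qwalk_zero_of (φ : QWState) (x : ℤ) (h1 : φ (x+1) = 0) (h2 : φ (x-1) = 0) :
    qwalk C φ x = 0 := by
  funext i
  fin_cases i
  · simp [qwalk0, h1]
  · simp [qwalk1, h2]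

lemma qwalk_add (φ φ' : QWState) : qwalk C (φ + φ') = qwalk C φ + qwalk C φ' := by
  funext x i
  fin_cases i <;>
    simp [qwalk0, qwalk1, Matrix.mulVec_add]

lemma qwalk_smul (c : ℂ) (φ : QWState) : qwalk C (c • φ) = c • qwalk C φ := by
  funext x i
  fin_cases i <;>
    simp [qwalk0, qwalk1, Matrix.mulVec_smul]

/-- norm-squared density -/
def nsq (φ : QWState) (x : ℤ) : ℝ := ‖φ x 0‖^2 + ‖φ x 1‖^2

lemma nsq_nonneg (φ : QWState) (x : ℤ) : 0 ≤ nsq φ x := by unfold nsq; positivity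

lemma nsq_eq_zero (φ : QWState) (x : ℤ) (h : φ x = 0) : nsq φ x = 0 := by
  simp [nsq, h]

lemma unitary_nsq {A : Matrix (Fin 2) (Fin 2) ℂ} (hA : A ∈ Matrix.unitaryGroup (Fin 2) ℂ)
    (v : Fin 2 → ℂ) : ‖A.mulVec v 0‖^2 + ‖A.mulVec v 1‖^2 = ‖v 0‖^2 + ‖v 1‖^2 := by
  have key : ∀ w : Fin 2 → ℂ, ‖w 0‖^2 + ‖w 1‖^2 = (dotProduct (star w) w).re := by
    intro w
    simp [dotProduct, Fin.sum_univ_two, Pi.star_apply, ← Complex.normSq_eq_norm_sq,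
      Complex.normSq, Complex.mul_re, Complex.conj_re, Complex.conj_im]
    try ring
  rw [key, key]
  congr 1
  have h1 : star A * A = 1 := Matrix.UnitaryGroup.star_mul_self ⟨A, hA⟩
  calc dotProduct (star (A.mulVec v)) (A.mulVec v)
      = dotProduct (Matrix.vecMul (star v) (star A)) (A.mulVec v) := by
        rw [Matrix.star_mulVec, Matrix.star_eq_conjTranspose]
    _ = dotProduct (star v) ((star A * A).mulVec v) := by
        rw [← Matrix.dotProduct_mulVec, Matrix.mulVec_mulVec]
    _ = dotProduct (star v) v := by rw [h1, Matrix.one_mulVec]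

end QW

section Part2
open QW
variable {C : ℤ → Matrix (Fin 2) (Fin 2) ℂ} {m : ℤ} {ψ : QWState}
variable (hm : 1 ≤ m) (hCm : ∀ x : ℤ, m ≤ |x| → C x = 1)
variable (hψm : ∀ x : ℤ, m ≤ |x| → ψ x = 0)

set_option maxHeartbeats 800000

include hm hCm hψm in
lemma iterL : ∀ n : ℕ, ∀ x : ℤ, m ≤ x → (qwalk C)^[n] ψ x 0 = 0 := by
  intro n
  induction n with
  | zero => intro x hx; rw [Function.iterate_zero_apply, hψm x (le_trans hx (le_abs_self x))]; rfl
  | succ n ih =>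
    intro x hx
    rw [Function.iterate_succ_apply', qwalk0]
    have hc : C (x+1) = 1 := hCm _ (by rw [abs_of_nonneg (by omega)]; omega)
    rw [hc, Matrix.one_mulVec]
    exact ih (x+1) (by omega)

include hm hCm hψm in
lemma iterR : ∀ n : ℕ, ∀ x : ℤ, x ≤ -m → (qwalk C)^[n] ψ x 1 = 0 := by
  intro n
  induction n with
  | zero => intro x hx; rw [Function.iterate_zero_apply, hψm x (by rw [abs_of_nonpos (by omega)]; omega)]; rfl
  | succ n ih =>
    intro x hx
    rw [Function.iterate_succ_apply', qwalk1]
    have hc : C (x-1) = 1 := hCm _ (by rw [abs_of_nonpos (by omega)]; omega)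
    rw [hc, Matrix.one_mulVec]
    exact ih (x-1) (by omega)

include hψm in
lemma iter_supp : ∀ n : ℕ, ∀ x : ℤ, (qwalk C)^[n] ψ x ≠ 0 → -(m + n) < x ∧ x < m + n := by
  intro n
  induction n with
  | zero =>
    intro x hx
    rw [Function.iterate_zero_apply] at hx
    have : ¬ (m ≤ |x|) := fun h => hx (hψm x h)
    have h2 := abs_lt.mp (lt_of_not_ge this)
    push_cast
    omega
  | succ n ih =>
    intro x hx
    rw [Function.iterate_succ_apply'] at hx
    by_contra hcon
    apply hx
    apply qwalk_zero_of
    · by_contra h1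
      have := ih (x+1) h1
      push_cast at hcon this ⊢; omega
    · by_contra h2
      have := ih (x-1) h2
      push_cast at hcon this ⊢; omega

include hm hCm in
lemma transR (n : ℕ) (x : ℤ) (hx : m ≤ x) :
    (qwalk C)^[n+1] ψ (x+1) 1 = (qwalk C)^[n] ψ x 1 := by
  rw [Function.iterate_succ_apply', qwalk1]
  have hc : C (x+1-1) = 1 := hCm _ (by rw [abs_of_nonneg (by omega)]; omega)
  rw [hc, Matrix.one_mulVec]
  norm_num

include hm hCm in
lemma transL (n : ℕ) (x : ℤ) (hx : x ≤ -m) :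
    (qwalk C)^[n+1] ψ (x-1) 0 = (qwalk C)^[n] ψ x 0 := by
  rw [Function.iterate_succ_apply', qwalk0]
  have hc : C (x-1+1) = 1 := hCm _ (by rw [abs_of_nonpos (by omega)]; omega)
  rw [hc, Matrix.one_mulVec]
  norm_num

include hm hCm in
lemma transR_iter (k : ℕ) (y : ℤ) (hy : m ≤ y) :
    ∀ j : ℕ, (qwalk C)^[k+j] ψ (y+j) 1 = (qwalk C)^[k] ψ y 1 := by
  intro j
  induction j with
  | zero => norm_num
  | succ j ih =>
    have : (y : ℤ) + (j+1 : ℕ) = (y + j) + 1 := by push_cast; ring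
    rw [this, show k + (j+1) = (k+j)+1 from rfl, transR hm hCm (k+j) (y+j) (by omega), ih]

include hm hCm in
lemma transL_iter (k : ℕ) (y : ℤ) (hy : y ≤ -m) :
    ∀ j : ℕ, (qwalk C)^[k+j] ψ (y-j) 0 = (qwalk C)^[k] ψ y 0 := by
  intro j
  induction j with
  | zero => norm_num
  | succ j ih =>
    have : (y : ℤ) - (j+1 : ℕ) = (y - j) - 1 := by push_cast; ring
    rw [this, show k + (j+1) = (k+j)+1 from rfl, transL hm hCm (k+j) (y-j) (by omega), ih]

end Part2

section Part3
set_option linter.unusedSectionVars false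
open QW

variable {C : ℤ → Matrix (Fin 2) (Fin 2) ℂ} {m : ℤ} {ψ : QWState}

lemma summable_of_finsupp (f : ℤ → ℝ) (s : Finset ℤ) (h : ∀ x ∉ s, f x = 0) :
    Summable f := summable_of_ne_finset_zero h

/-- tsum over a subtype equals a filtered finset sum, for finitely supported f -/
lemma tsum_subtype_eq_filter (f : ℤ → ℝ) (P : ℤ → Prop) [DecidablePred P] (s : Finset ℤ)
    (h : ∀ x ∉ s, f x = 0) :
    ∑' x : {x : ℤ // P x}, f x.1 = ∑ x ∈ s.filter (fun x => P x), f x := by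
  classical
  rw [show (∑' x : {x : ℤ // P x}, f x.1) = ∑' x : ({x : ℤ | P x} : Set ℤ), f x from rfl,
    tsum_subtype]
  rw [tsum_eq_sum (s := s.filter (fun x => P x))]
  · refine Finset.sum_congr rfl (fun x hx => ?_)
    rw [Finset.mem_filter] at hx
    simp [Set.indicator_apply, hx.2]
  · intro x hx
    rw [Finset.mem_filter] at hx
    push_neg at hx
    by_cases hP : P x
    · simp only [Set.indicator_apply, Set.mem_setOf_eq, hP, if_true]
      exact h x (fun hs => (hx hs) hP)
    · simp [Set.indicator_apply, hP]

/-- one-step conservation of the total probability -/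
lemma cons_step (hC : ∀ x, C x ∈ Matrix.unitaryGroup (Fin 2) ℂ)
    (φ : QWState) (hfin : Set.Finite {x : ℤ | φ x ≠ 0}) :
    ∑' x : ℤ, nsq (qwalk C φ) x = ∑' x : ℤ, nsq φ x := by
  classical
  set F : ℤ → ℝ := fun x => ‖(C x).mulVec (φ x) 0‖^2 with hF
  set G : ℤ → ℝ := fun x => ‖(C x).mulVec (φ x) 1‖^2 with hG
  have hFz : ∀ x ∉ hfin.toFinset, F x = 0 := by
    intro x hx
    have hx' : φ x = 0 := by simpa using hx
    simp [hF, hx']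
  have hGz : ∀ x ∉ hfin.toFinset, G x = 0 := by
    intro x hx
    have hx' : φ x = 0 := by simpa using hx
    simp [hG, hx']
  have hsF : Summable F := summable_of_finsupp _ _ hFz
  have hsG : Summable G := summable_of_finsupp _ _ hGz
  have hsF1 : Summable (fun x : ℤ => F (x+1)) :=
    ((Equiv.addRight (1:ℤ)).summable_iff (f := F)).mpr hsF
  have hsG1 : Summable (fun x : ℤ => G (x-1)) :=
    ((Equiv.subRight (1:ℤ)).summable_iff (f := G)).mpr hsG
  have h1 : ∀ x : ℤ, nsq (qwalk C φ) x = F (x+1) + G (x-1) := by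
    intro x; rfl
  calc ∑' x : ℤ, nsq (qwalk C φ) x
      = ∑' x : ℤ, (F (x+1) + G (x-1)) := by exact tsum_congr h1
    _ = (∑' x : ℤ, F (x+1)) + ∑' x : ℤ, G (x-1) := Summable.tsum_add hsF1 hsG1
    _ = (∑' x : ℤ, F x) + ∑' x : ℤ, G x := by
        have e1 : (∑' x : ℤ, F (x+1)) = ∑' x : ℤ, F x := (Equiv.addRight (1:ℤ)).tsum_eq F
        have e2 : (∑' x : ℤ, G (x-1)) = ∑' x : ℤ, G x := (Equiv.subRight (1:ℤ)).tsum_eq G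
        rw [e1, e2]
    _ = ∑' x : ℤ, (F x + G x) := (Summable.tsum_add hsF hsG).symm
    _ = ∑' x : ℤ, nsq φ x := by
        refine tsum_congr (fun x => ?_)
        exact unitary_nsq (hC x) (φ x)

variable (hm : 1 ≤ m) (hCm : ∀ x : ℤ, m ≤ |x| → C x = 1)
variable (hψm : ∀ x : ℤ, m ≤ |x| → ψ x = 0)

include hψm in
lemma iter_finsupp (n : ℕ) : Set.Finite {x : ℤ | (qwalk C)^[n] ψ x ≠ 0} := by
  apply Set.Finite.subset (Set.finite_Ioo (-(m + n) : ℤ) (m + n))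
  intro x hx
  have := iter_supp hψm n x hx
  simp only [Set.mem_Ioo]
  omega

include hm hCm hψm in
lemma cons_iter (hC : ∀ x, C x ∈ Matrix.unitaryGroup (Fin 2) ℂ)
    (hnorm : ∑' x : ℤ, nsq ψ x = 1) (n : ℕ) :
    ∑' x : ℤ, nsq ((qwalk C)^[n] ψ) x = 1 := by
  induction n with
  | zero => simpa using hnorm
  | succ n ih =>
    rw [Function.iterate_succ_apply', cons_step hC _ (iter_finsupp hψm n)]
    exact ih

end Part3

section Part4
set_option linter.unusedSectionVars false
open QW Finset

def Rr (C : ℤ → Matrix (Fin 2) (Fin 2) ℂ) (ψ : QWState) (m : ℤ) (n : ℕ) : ℝ :=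
  ∑ x ∈ Finset.Ioc m (m + (n:ℤ)), nsq ((qwalk C)^[n] ψ) x

def Ll (C : ℤ → Matrix (Fin 2) (Fin 2) ℂ) (ψ : QWState) (m : ℤ) (n : ℕ) : ℝ :=
  ∑ x ∈ Finset.Ioc (-(m + (n:ℤ)) - 1) (-m - 1), nsq ((qwalk C)^[n] ψ) x

def aa (C : ℤ → Matrix (Fin 2) (Fin 2) ℂ) (ψ : QWState) (m : ℤ) (n : ℕ) : ℝ :=
  ∑ x ∈ Finset.Ioc (-m - 1) m, nsq ((qwalk C)^[n] ψ) x

def oR (C : ℤ → Matrix (Fin 2) (Fin 2) ℂ) (ψ : QWState) (m : ℤ) (n : ℕ) : ℝ :=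
  ‖(qwalk C)^[n] ψ m 1‖^2

def oL (C : ℤ → Matrix (Fin 2) (Fin 2) ℂ) (ψ : QWState) (m : ℤ) (n : ℕ) : ℝ :=
  ‖(qwalk C)^[n] ψ (-m) 0‖^2

lemma sum_Ioc_split (f : ℤ → ℝ) (a b c : ℤ) (h1 : a ≤ b) (h2 : b ≤ c) :
    ∑ x ∈ Finset.Ioc a c, f x = ∑ x ∈ Finset.Ioc a b, f x + ∑ x ∈ Finset.Ioc b c, f x := by
  rw [← Finset.Ioc_union_Ioc_eq_Ioc h1 h2, Finset.sum_union]
  refine Finset.disjoint_left.mpr ?_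
  intro x hx hx'
  simp only [Finset.mem_Ioc] at hx hx'
  omega

variable {C : ℤ → Matrix (Fin 2) (Fin 2) ℂ} {m : ℤ} {ψ : QWState}
variable (hm : 1 ≤ m) (hCm : ∀ x : ℤ, m ≤ |x| → C x = 1)
variable (hψm : ∀ x : ℤ, m ≤ |x| → ψ x = 0)

include hm hCm hψm in
lemma fn_right (n : ℕ) (x : ℤ) (hx : m ≤ x) :
    nsq ((qwalk C)^[n] ψ) x = ‖(qwalk C)^[n] ψ x 1‖^2 := by
  rw [nsq, iterL hm hCm hψm n x hx]
  simp

include hm hCm hψm in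
lemma fn_left (n : ℕ) (x : ℤ) (hx : x ≤ -m) :
    nsq ((qwalk C)^[n] ψ) x = ‖(qwalk C)^[n] ψ x 0‖^2 := by
  rw [nsq, iterR hm hCm hψm n x hx]
  simp

include hm hCm hψm in
lemma total_eq (hC : ∀ x, C x ∈ Matrix.unitaryGroup (Fin 2) ℂ)
    (hnorm : ∑' x : ℤ, nsq ψ x = 1) (n : ℕ) :
    ∑ x ∈ Finset.Ioc (-(m + (n:ℤ)) - 1) (m + (n:ℤ)), nsq ((qwalk C)^[n] ψ) x = 1 := by
  rw [← cons_iter hm hCm hψm hC hnorm n]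
  symm
  apply tsum_eq_sum
  intro x hx
  apply nsq_eq_zero
  by_contra h
  have := iter_supp hψm n x h
  rw [Finset.mem_Ioc] at hx
  omega

include hm hCm hψm in
lemma split_total (hC : ∀ x, C x ∈ Matrix.unitaryGroup (Fin 2) ℂ)
    (hnorm : ∑' x : ℤ, nsq ψ x = 1) (n : ℕ) :
    Ll C ψ m n + aa C ψ m n + Rr C ψ m n = 1 := by
  rw [← total_eq hm hCm hψm hC hnorm n]
  rw [sum_Ioc_split _ _ m _ (by omega) (by omega),
      sum_Ioc_split _ _ (-m-1) m (by omega) (by omega)]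
  rw [Ll, aa, Rr]
  try ring

include hm hCm hψm in
lemma Rr_succ (n : ℕ) : Rr C ψ m (n+1) = Rr C ψ m n + oR C ψ m n := by
  rw [Rr]
  have h1 : ∀ x ∈ Finset.Ioc m (m + ((n+1:ℕ):ℤ)), nsq ((qwalk C)^[n+1] ψ) x
      = ‖(qwalk C)^[n+1] ψ x 1‖^2 := by
    intro x hx
    rw [Finset.mem_Ioc] at hx
    exact fn_right hm hCm hψm (n+1) x (by omega)
  rw [Finset.sum_congr rfl h1]
  have hmap : Finset.Ioc m (m + ((n+1:ℕ):ℤ))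
      = (Finset.Ioc (m-1) (m + (n:ℤ))).map (addRightEmbedding 1) := by
    rw [Finset.map_add_right_Ioc]
    congr 1 <;> push_cast <;> ring
  rw [hmap, Finset.sum_map]
  have h2 : ∀ y ∈ Finset.Ioc (m-1) (m + (n:ℤ)),
      ‖(qwalk C)^[n+1] ψ (addRightEmbedding 1 y) 1‖^2 = ‖(qwalk C)^[n] ψ y 1‖^2 := by
    intro y hy
    rw [Finset.mem_Ioc] at hy
    have : (addRightEmbedding 1 y : ℤ) = y + 1 := rfl
    rw [this, transR hm hCm n y (by omega)]
  rw [Finset.sum_congr rfl h2]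
  rw [sum_Ioc_split _ _ m _ (by omega) (by omega)]
  have hsing : Finset.Ioc (m-1) m = {m} := by
    ext x; simp only [Finset.mem_Ioc, Finset.mem_singleton]; omega
  rw [hsing, Finset.sum_singleton]
  rw [add_comm, Rr, oR]
  congr 1
  refine Finset.sum_congr rfl (fun x hx => ?_)
  rw [Finset.mem_Ioc] at hx
  exact (fn_right hm hCm hψm n x (by omega)).symm

include hm hCm hψm in
lemma Ll_succ (n : ℕ) : Ll C ψ m (n+1) = Ll C ψ m n + oL C ψ m n := by
  rw [Ll]
  have h1 : ∀ x ∈ Finset.Ioc (-(m + ((n+1:ℕ):ℤ)) - 1) (-m - 1), nsq ((qwalk C)^[n+1] ψ) x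
      = ‖(qwalk C)^[n+1] ψ x 0‖^2 := by
    intro x hx
    rw [Finset.mem_Ioc] at hx
    exact fn_left hm hCm hψm (n+1) x (by omega)
  rw [Finset.sum_congr rfl h1]
  have hmap : Finset.Ioc (-(m + ((n+1:ℕ):ℤ)) - 1) (-m - 1)
      = (Finset.Ioc (-(m + (n:ℤ)) - 1) (-m)).map (addRightEmbedding (-1)) := by
    rw [Finset.map_add_right_Ioc]
    congr 1 <;> push_cast <;> ring
  rw [hmap, Finset.sum_map]
  have h2 : ∀ y ∈ Finset.Ioc (-(m + (n:ℤ)) - 1) (-m),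
      ‖(qwalk C)^[n+1] ψ (addRightEmbedding (-1) y) 0‖^2 = ‖(qwalk C)^[n] ψ y 0‖^2 := by
    intro y hy
    rw [Finset.mem_Ioc] at hy
    have : (addRightEmbedding (-1) y : ℤ) = y - 1 := by
      show y + (-1) = y - 1; ring
    rw [this, transL hm hCm n y (by omega)]
  rw [Finset.sum_congr rfl h2]
  rw [sum_Ioc_split _ _ (-m-1) _ (by omega) (by omega)]
  have hsing : Finset.Ioc (-m-1) (-m) = {-m} := by
    ext x; simp only [Finset.mem_Ioc, Finset.mem_singleton]; omega
  rw [hsing, Finset.sum_singleton]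
  rw [Ll, oL]
  congr 1
  refine Finset.sum_congr rfl (fun x hx => ?_)
  rw [Finset.mem_Ioc] at hx
  exact (fn_left hm hCm hψm n x (by omega)).symm

include hm hCm hψm in
lemma Rr_range (n : ℕ) : Rr C ψ m n = ∑ k ∈ Finset.range n, oR C ψ m k := by
  induction n with
  | zero => simp [Rr]
  | succ n ih => rw [Rr_succ hm hCm hψm n, Finset.sum_range_succ, ih]

include hm hCm hψm in
lemma Ll_range (n : ℕ) : Ll C ψ m n = ∑ k ∈ Finset.range n, oL C ψ m k := by
  induction n with
  | zero =>
    rw [Ll]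
    have : Finset.Ioc (-(m + ((0:ℕ):ℤ)) - 1) (-m - 1) = ∅ := by
      ext x; simp only [Finset.mem_Ioc, Finset.notMem_empty, iff_false]; omega
    simp [this]
  | succ n ih => rw [Ll_succ hm hCm hψm n, Finset.sum_range_succ, ih]

lemma Rr_nonneg (n : ℕ) : 0 ≤ Rr C ψ m n :=
  Finset.sum_nonneg (fun x _ => nsq_nonneg _ x)

lemma Ll_nonneg (n : ℕ) : 0 ≤ Ll C ψ m n :=
  Finset.sum_nonneg (fun x _ => nsq_nonneg _ x)

lemma aa_nonneg (n : ℕ) : 0 ≤ aa C ψ m n :=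
  Finset.sum_nonneg (fun x _ => nsq_nonneg _ x)

include hm hCm hψm in
lemma Rr_mono : Monotone (Rr C ψ m) := by
  apply monotone_nat_of_le_succ
  intro n
  rw [Rr_succ hm hCm hψm n]
  have : 0 ≤ oR C ψ m n := by rw [oR]; positivity
  linarith

include hm hCm hψm in
lemma Ll_mono : Monotone (Ll C ψ m) := by
  apply monotone_nat_of_le_succ
  intro n
  rw [Ll_succ hm hCm hψm n]
  have : 0 ≤ oL C ψ m n := by rw [oL]; positivity
  linarith

include hm hCm hψm in
lemma Rr_le_one (hC : ∀ x, C x ∈ Matrix.unitaryGroup (Fin 2) ℂ)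
    (hnorm : ∑' x : ℤ, nsq ψ x = 1) (n : ℕ) : Rr C ψ m n ≤ 1 := by
  have := split_total hm hCm hψm hC hnorm n
  have h1 := Ll_nonneg (C := C) (ψ := ψ) (m := m) n
  have h2 := aa_nonneg (C := C) (ψ := ψ) (m := m) n
  linarith

include hm hCm hψm in
lemma Ll_le_one (hC : ∀ x, C x ∈ Matrix.unitaryGroup (Fin 2) ℂ)
    (hnorm : ∑' x : ℤ, nsq ψ x = 1) (n : ℕ) : Ll C ψ m n ≤ 1 := by
  have := split_total hm hCm hψm hC hnorm n
  have h1 := Rr_nonneg (C := C) (ψ := ψ) (m := m) n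
  have h2 := aa_nonneg (C := C) (ψ := ψ) (m := m) n
  linarith

end Part4

section Part5
set_option linter.unusedSectionVars false
open QW Finset

variable {C : ℤ → Matrix (Fin 2) (Fin 2) ℂ} {m : ℤ} {ψ : QWState}
variable (hm : 1 ≤ m) (hCm : ∀ x : ℤ, m ≤ |x| → C x = 1)
variable (hψm : ∀ x : ℤ, m ≤ |x| → ψ x = 0)

include hm hCm in
lemma val_right (n : ℕ) (x : ℤ) (hx1 : m < x) (hx2 : x ≤ m + (n:ℤ)) :
    ‖(qwalk C)^[n] ψ x 1‖^2 = oR C ψ m (n - (x - m).toNat) := by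
  set j := (x - m).toNat with hjdef
  have hj : (j:ℤ) = x - m := Int.toNat_of_nonneg (by omega)
  have hj1 : 1 ≤ j := by omega
  have hjn : j ≤ n := by omega
  have hkey := transR_iter (ψ := ψ) hm hCm (n - j) m (le_refl m) j
  rw [Nat.sub_add_cancel hjn] at hkey
  have hx : m + (j:ℤ) = x := by omega
  rw [hx] at hkey
  rw [oR, hkey]

include hm hCm in
lemma val_left (n : ℕ) (x : ℤ) (hx1 : x < -m) (hx2 : -(m + (n:ℤ)) ≤ x) :
    ‖(qwalk C)^[n] ψ x 0‖^2 = oL C ψ m (n - (-m - x).toNat) := by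
  set j := (-m - x).toNat with hjdef
  have hj : (j:ℤ) = -m - x := Int.toNat_of_nonneg (by omega)
  have hj1 : 1 ≤ j := by omega
  have hjn : j ≤ n := by omega
  have hkey := transL_iter (ψ := ψ) hm hCm (n - j) (-m) (le_refl (-m)) j
  rw [Nat.sub_add_cancel hjn] at hkey
  have hx : -m - (j:ℤ) = x := by omega
  rw [hx] at hkey
  rw [oL, hkey]

include hm hCm hψm in
lemma key_bound_right {ε : ℝ} (hε1 : 0 < ε) (n : ℕ) (A : Finset ℤ)
    (hA : ∀ x ∈ A, m < x ∧ x ≤ m + (n:ℤ) ∧ (x:ℝ) ≤ (1-ε)*n) :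
    ∑ x ∈ A, nsq ((qwalk C)^[n] ψ) x
      ≤ Rr C ψ m n - Rr C ψ m (min (⌈ε*(n:ℝ)⌉₊) n) := by
  set L := min (⌈ε*(n:ℝ)⌉₊) n with hL
  have hLn : L ≤ n := min_le_right _ _
  have step1 : ∑ x ∈ A, nsq ((qwalk C)^[n] ψ) x
      = ∑ x ∈ A, oR C ψ m (n - (x - m).toNat) := by
    refine Finset.sum_congr rfl (fun x hx => ?_)
    obtain ⟨h1, h2, h3⟩ := hA x hx
    rw [fn_right hm hCm hψm n x (by omega), val_right hm hCm n x h1 h2]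
  rw [step1]
  have hinj : Set.InjOn (fun x : ℤ => n - (x - m).toNat) A := by
    intro x hx y hy hxy
    obtain ⟨hx1, hx2, -⟩ := hA x hx
    obtain ⟨hy1, hy2, -⟩ := hA y hy
    simp only at hxy
    omega
  rw [← Finset.sum_image hinj]
  have hsub : A.image (fun x : ℤ => n - (x - m).toNat) ⊆ Finset.Ico L n := by
    intro k hk
    rw [Finset.mem_image] at hk
    obtain ⟨x, hx, hkx⟩ := hk
    obtain ⟨hx1, hx2, hx3⟩ := hA x hx
    rw [Finset.mem_Ico]
    constructor
    · have hjle : (x - m).toNat ≤ n := by omega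
      have hcast : ((n - (x - m).toNat : ℕ) : ℝ) = (n:ℝ) - ((x:ℝ) - (m:ℝ)) := by
        push_cast [Nat.cast_sub hjle]
        have : (((x - m).toNat : ℤ) : ℝ) = (x:ℝ) - (m:ℝ) := by
          rw [Int.toNat_of_nonneg (by omega)]; push_cast; ring
        rw [← this]
        push_cast
        ring
      have hm' : (1:ℝ) ≤ (m:ℝ) := by exact_mod_cast hm
      have hkR : ε*(n:ℝ) ≤ ((n - (x - m).toNat : ℕ) : ℝ) := by
        rw [hcast]; nlinarith
      have : ⌈ε*(n:ℝ)⌉₊ ≤ n - (x - m).toNat := Nat.ceil_le.mpr hkR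
      omega
    · omega
  calc ∑ k ∈ A.image (fun x : ℤ => n - (x - m).toNat), oR C ψ m k
      ≤ ∑ k ∈ Finset.Ico L n, oR C ψ m k := by
        apply Finset.sum_le_sum_of_subset_of_nonneg hsub
        intro k _ _
        rw [oR]; positivity
    _ = Rr C ψ m n - Rr C ψ m L := by
        rw [Finset.sum_Ico_eq_sub _ hLn, Rr_range hm hCm hψm, Rr_range hm hCm hψm]

include hm hCm hψm in
lemma key_bound_left {ε : ℝ} (hε1 : 0 < ε) (n : ℕ) (A : Finset ℤ)
    (hA : ∀ x ∈ A, x < -m ∧ -(m + (n:ℤ)) ≤ x ∧ -((1-ε)*n) ≤ (x:ℝ)) :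
    ∑ x ∈ A, nsq ((qwalk C)^[n] ψ) x
      ≤ Ll C ψ m n - Ll C ψ m (min (⌈ε*(n:ℝ)⌉₊) n) := by
  set L := min (⌈ε*(n:ℝ)⌉₊) n with hL
  have hLn : L ≤ n := min_le_right _ _
  have step1 : ∑ x ∈ A, nsq ((qwalk C)^[n] ψ) x
      = ∑ x ∈ A, oL C ψ m (n - (-m - x).toNat) := by
    refine Finset.sum_congr rfl (fun x hx => ?_)
    obtain ⟨h1, h2, h3⟩ := hA x hx
    rw [fn_left hm hCm hψm n x (by omega), val_left hm hCm n x h1 h2]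
  rw [step1]
  have hinj : Set.InjOn (fun x : ℤ => n - (-m - x).toNat) A := by
    intro x hx y hy hxy
    obtain ⟨hx1, hx2, -⟩ := hA x hx
    obtain ⟨hy1, hy2, -⟩ := hA y hy
    simp only at hxy
    omega
  rw [← Finset.sum_image hinj]
  have hsub : A.image (fun x : ℤ => n - (-m - x).toNat) ⊆ Finset.Ico L n := by
    intro k hk
    rw [Finset.mem_image] at hk
    obtain ⟨x, hx, hkx⟩ := hk
    obtain ⟨hx1, hx2, hx3⟩ := hA x hx
    rw [Finset.mem_Ico]
    constructor
    · have hjle : (-m - x).toNat ≤ n := by omega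
      have hcast : ((n - (-m - x).toNat : ℕ) : ℝ) = (n:ℝ) - (-(m:ℝ) - (x:ℝ)) := by
        push_cast [Nat.cast_sub hjle]
        have : (((-m - x).toNat : ℤ) : ℝ) = -(m:ℝ) - (x:ℝ) := by
          rw [Int.toNat_of_nonneg (by omega)]; push_cast; ring
        rw [← this]
        push_cast
        ring
      have hm' : (1:ℝ) ≤ (m:ℝ) := by exact_mod_cast hm
      have hkR : ε*(n:ℝ) ≤ ((n - (-m - x).toNat : ℕ) : ℝ) := by
        rw [hcast]; nlinarith
      have : ⌈ε*(n:ℝ)⌉₊ ≤ n - (-m - x).toNat := Nat.ceil_le.mpr hkR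
      omega
    · omega
  calc ∑ k ∈ A.image (fun x : ℤ => n - (-m - x).toNat), oL C ψ m k
      ≤ ∑ k ∈ Finset.Ico L n, oL C ψ m k := by
        apply Finset.sum_le_sum_of_subset_of_nonneg hsub
        intro k _ _
        rw [oL]; positivity
    _ = Ll C ψ m n - Ll C ψ m L := by
        rw [Finset.sum_Ico_eq_sub _ hLn, Ll_range hm hCm hψm, Ll_range hm hCm hψm]

end Part5

section Part6
set_option linter.unusedSectionVars false
open QW Finset

/-- the finite-dimensional Hilbert space on the box `Ioc (-m-1) m` -/
abbrev EJ (m : ℤ) := EuclideanSpace ℂ (↥(Finset.Ioc (-m-1) m) × Fin 2)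

def extJ (m : ℤ) (v : EJ m) : QWState :=
  fun x i => if h : x ∈ Finset.Ioc (-m-1) m then v (⟨x, h⟩, i) else 0

def resJ (m : ℤ) (φ : QWState) : EJ m := WithLp.toLp 2 (fun p : ↥(Finset.Ioc (-m-1) m) × Fin 2 => φ p.1.1 p.2)

lemma resJ_extJ (m : ℤ) (v : EJ m) : resJ m (extJ m v) = v := by
  ext p
  show extJ m v p.1.1 p.2 = v p
  rw [extJ, dif_pos p.1.2]

lemma extJ_zero_of (m : ℤ) (v : EJ m) (x : ℤ) (hx : x ∉ Finset.Ioc (-m-1) m) :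
    extJ m v x = 0 := by
  funext i
  show (if h : x ∈ Finset.Ioc (-m-1) m then v (⟨x, h⟩, i) else 0) = 0
  rw [dif_neg hx]

def Vl (C : ℤ → Matrix (Fin 2) (Fin 2) ℂ) (m : ℤ) : EJ m →ₗ[ℂ] EJ m where
  toFun v := resJ m (qwalk C (extJ m v))
  map_add' v w := by
    have h : extJ m (v + w) = extJ m v + extJ m w := by
      funext x i
      show (if h : x ∈ Finset.Ioc (-m-1) m then (v + w) (⟨x, h⟩, i) else 0)
        = (if h : x ∈ Finset.Ioc (-m-1) m then v (⟨x, h⟩, i) else 0)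
          + (if h : x ∈ Finset.Ioc (-m-1) m then w (⟨x, h⟩, i) else 0)
      by_cases hx : x ∈ Finset.Ioc (-m-1) m
      · rw [dif_pos hx, dif_pos hx, dif_pos hx]; rfl
      · rw [dif_neg hx, dif_neg hx, dif_neg hx]; ring
    show resJ m (qwalk C (extJ m (v + w)))
      = resJ m (qwalk C (extJ m v)) + resJ m (qwalk C (extJ m w))
    rw [h, qwalk_add]
    ext p
    simp [resJ]
  map_smul' c v := by
    have h : extJ m (c • v) = c • extJ m v := by
      funext x i
      show (if h : x ∈ Finset.Ioc (-m-1) m then (c • v) (⟨x, h⟩, i) else 0)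
        = c • (if h : x ∈ Finset.Ioc (-m-1) m then v (⟨x, h⟩, i) else 0)
      by_cases hx : x ∈ Finset.Ioc (-m-1) m
      · rw [dif_pos hx, dif_pos hx]; rfl
      · rw [dif_neg hx, dif_neg hx]; simp
    show resJ m (qwalk C (extJ m (c • v))) = c • resJ m (qwalk C (extJ m v))
    rw [h, qwalk_smul]
    ext p
    simp [resJ]

def Vc (C : ℤ → Matrix (Fin 2) (Fin 2) ℂ) (m : ℤ) : EJ m →L[ℂ] EJ m :=
  LinearMap.toContinuousLinearMap (Vl C m)

lemma Vc_apply (C : ℤ → Matrix (Fin 2) (Fin 2) ℂ) (m : ℤ) (v : EJ m) :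
    Vc C m v = resJ m (qwalk C (extJ m v)) := by
  rw [Vc, LinearMap.coe_toContinuousLinearMap']
  rfl

lemma normsq_resJ (m : ℤ) (φ : QWState) :
    ‖resJ m φ‖^2 = ∑ x ∈ Finset.Ioc (-m-1) m, nsq φ x := by
  rw [EuclideanSpace.norm_eq, Real.sq_sqrt (by positivity)]
  rw [Fintype.sum_prod_type]
  rw [← Finset.sum_coe_sort (Finset.Ioc (-m-1) m) (fun x => nsq φ x)]
  refine Finset.sum_congr rfl (fun a _ => ?_)
  rw [Fin.sum_univ_two]
  rfl

end Part6

section Part7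
set_option linter.unusedSectionVars false
open QW Finset

variable {C : ℤ → Matrix (Fin 2) (Fin 2) ℂ} {m : ℤ} {ψ : QWState}
variable (hm : 1 ≤ m) (hCm : ∀ x : ℤ, m ≤ |x| → C x = 1)
variable (hψm : ∀ x : ℤ, m ≤ |x| → ψ x = 0)

lemma extJ_finsupp (m : ℤ) (v : EJ m) : Set.Finite {x : ℤ | extJ m v x ≠ 0} := by
  apply Set.Finite.subset (Finset.Ioc (-m-1) m : Finset ℤ).finite_toSet
  intro x hx
  by_contra hmem
  exact hx (extJ_zero_of m v x (by simpa using hmem))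

lemma qwalk_extJ_supp (m : ℤ) (v : EJ m) (x : ℤ) (hx : x ∉ Finset.Ioc (-m-2) (m+1)) :
    qwalk C (extJ m v) x = 0 := by
  rw [Finset.mem_Ioc] at hx
  push_neg at hx
  apply qwalk_zero_of
  · apply extJ_zero_of
    rw [Finset.mem_Ioc]
    omega
  · apply extJ_zero_of
    rw [Finset.mem_Ioc]
    omega

include hm in
lemma Vc_normsq (hC : ∀ x, C x ∈ Matrix.unitaryGroup (Fin 2) ℂ) (v : EJ m) :
    ‖Vc C m v‖^2 + nsq (qwalk C (extJ m v)) (-m-1) + nsq (qwalk C (extJ m v)) (m+1)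
      = ‖v‖^2 := by
  have h1 : ‖Vc C m v‖^2 = ∑ x ∈ Finset.Ioc (-m-1) m, nsq (qwalk C (extJ m v)) x := by
    rw [Vc_apply, normsq_resJ]
  have h2 : ‖v‖^2 = ∑ x ∈ Finset.Ioc (-m-1) m, nsq (extJ m v) x := by
    conv_lhs => rw [← resJ_extJ m v]
    rw [normsq_resJ]
  have h3 : ∑ x ∈ Finset.Ioc (-m-1) m, nsq (extJ m v) x = ∑' x : ℤ, nsq (extJ m v) x := by
    symm; apply tsum_eq_sum
    intro x hx
    exact nsq_eq_zero _ x (extJ_zero_of m v x hx)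
  have h4 : ∑' x : ℤ, nsq (qwalk C (extJ m v)) x = ∑' x : ℤ, nsq (extJ m v) x :=
    cons_step hC _ (extJ_finsupp m v)
  have h5 : ∑' x : ℤ, nsq (qwalk C (extJ m v)) x
      = ∑ x ∈ Finset.Ioc (-m-2) (m+1), nsq (qwalk C (extJ m v)) x := by
    apply tsum_eq_sum
    intro x hx
    exact nsq_eq_zero _ x (qwalk_extJ_supp m v x hx)
  have h6 : ∑ x ∈ Finset.Ioc (-m-2) (m+1), nsq (qwalk C (extJ m v)) x
      = nsq (qwalk C (extJ m v)) (-m-1) + (∑ x ∈ Finset.Ioc (-m-1) m, nsq (qwalk C (extJ m v)) x)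
        + nsq (qwalk C (extJ m v)) (m+1) := by
    rw [sum_Ioc_split _ _ m _ (by omega) (by omega),
        sum_Ioc_split _ _ (-m-1) m (by omega) (by omega)]
    have e1 : Finset.Ioc (-m-2) (-m-1) = {-m-1} := by
      ext x; simp only [Finset.mem_Ioc, Finset.mem_singleton]; omega
    have e2 : Finset.Ioc m (m+1) = {m+1} := by
      ext x; simp only [Finset.mem_Ioc, Finset.mem_singleton]; omega
    rw [e1, e2, Finset.sum_singleton, Finset.sum_singleton]
  rw [h1, h2, h3, ← h4, h5, h6]
  ring

include hm in
lemma Vc_contraction (hC : ∀ x, C x ∈ Matrix.unitaryGroup (Fin 2) ℂ) (v : EJ m) :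
    ‖Vc C m v‖ ≤ ‖v‖ := by
  have := Vc_normsq hm hC v
  have p1 := nsq_nonneg (qwalk C (extJ m v)) (-m-1)
  have p2 := nsq_nonneg (qwalk C (extJ m v)) (m+1)
  nlinarith [norm_nonneg (Vc C m v), norm_nonneg v]

include hm hCm hψm in
lemma res_iter (n : ℕ) :
    ((Vc C m) ^ n) (resJ m ψ) = resJ m ((qwalk C)^[n] ψ) := by
  induction n with
  | zero => simp
  | succ n ih =>
    rw [pow_succ', Function.iterate_succ_apply']
    rw [ContinuousLinearMap.mul_apply, ih]
    rw [Vc_apply]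
    set φ := (qwalk C)^[n] ψ with hφ
    ext p
    show qwalk C (extJ m (resJ m φ)) p.1.1 p.2 = qwalk C φ p.1.1 p.2
    obtain ⟨⟨x, hx⟩, i⟩ := p
    rw [Finset.mem_Ioc] at hx
    fin_cases i
    · show qwalk C (extJ m (resJ m φ)) x 0 = qwalk C φ x 0
      rw [qwalk0, qwalk0]
      by_cases hx1 : x + 1 ∈ Finset.Ioc (-m-1) m
      · congr 1
        funext j
        show (if h : x+1 ∈ Finset.Ioc (-m-1) m then φ _ j else 0) = φ (x+1) j
        rw [dif_pos hx1]
      · rw [Finset.mem_Ioc] at hx1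
        have hxm : x = m := by omega
        have hc : C (x+1) = 1 := hCm (x+1) (by rw [abs_of_nonneg (by omega)]; omega)
        rw [hc, Matrix.one_mulVec, Matrix.one_mulVec]
        have hr : φ (x+1) 0 = 0 := iterL hm hCm hψm n (x+1) (by omega)
        rw [hr]
        show (if h : x+1 ∈ Finset.Ioc (-m-1) m then φ _ 0 else 0) = 0
        rw [dif_neg (by rw [Finset.mem_Ioc]; omega)]
    · show qwalk C (extJ m (resJ m φ)) x 1 = qwalk C φ x 1
      rw [qwalk1, qwalk1]
      by_cases hx1 : x - 1 ∈ Finset.Ioc (-m-1) m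
      · congr 1
        funext j
        show (if h : x-1 ∈ Finset.Ioc (-m-1) m then φ _ j else 0) = φ (x-1) j
        rw [dif_pos hx1]
      · rw [Finset.mem_Ioc] at hx1
        have hxm : x = -m := by omega
        have hc : C (x-1) = 1 := hCm (x-1) (by rw [abs_of_nonpos (by omega)]; omega)
        rw [hc, Matrix.one_mulVec, Matrix.one_mulVec]
        have hr : φ (x-1) 1 = 0 := iterR hm hCm hψm n (x-1) (by omega)
        rw [hr]
        show (if h : x-1 ∈ Finset.Ioc (-m-1) m then φ _ 1 else 0) = 0
        rw [dif_neg (by rw [Finset.mem_Ioc]; omega)]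

include hm hCm hψm in
lemma aa_eq_norm (n : ℕ) : aa C ψ m n = ‖((Vc C m) ^ n) (resJ m ψ)‖^2 := by
  rw [res_iter hm hCm hψm n, normsq_resJ, aa]

end Part7

section Part8
set_option linter.unusedSectionVars false
set_option maxHeartbeats 1000000
open QW Finset

variable {C : ℤ → Matrix (Fin 2) (Fin 2) ℂ} {m : ℤ}
variable (hm : 1 ≤ m) (hCm : ∀ x : ℤ, m ≤ |x| → C x = 1)

/-- no compactly supported eigenvector for unimodular eigenvalue -/
lemma eig_kill (hd22 : ∀ x, C x 1 1 ≠ 0) (φ : QWState)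
    (hfin : Set.Finite {x : ℤ | φ x ≠ 0}) (μ : ℂ) (hμ : μ ≠ 0)
    (hU : ∀ x i, qwalk C φ x i = μ * φ x i) : ∀ x, φ x = 0 := by
  by_contra hne
  push_neg at hne
  obtain ⟨x1, hx1⟩ := hne
  have hx1T : x1 ∈ hfin.toFinset := by rw [Set.Finite.mem_toFinset]; exact hx1
  set T := hfin.toFinset with hT
  have hTne : T.Nonempty := ⟨x1, hx1T⟩
  set x₀ := T.max' hTne with hx₀
  have hx₀mem : x₀ ∈ T := T.max'_mem hTne
  have hx₀ne : φ x₀ ≠ 0 := by rwa [hT, Set.Finite.mem_toFinset] at hx₀mem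
  have hgt : ∀ y : ℤ, x₀ < y → φ y = 0 := by
    intro y hy
    by_contra hy2
    have : y ∈ T := by rw [hT, Set.Finite.mem_toFinset]; exact hy2
    exact absurd (T.le_max' y this) (by omega)
  have h1 : φ x₀ 0 = 0 := by
    have e := hU x₀ 0
    rw [qwalk0, hgt (x₀+1) (by omega), Matrix.mulVec_zero] at e
    have := e.symm
    rcases mul_eq_zero.mp this with h | h
    · exact absurd h hμ
    · exact h
  have h2 : φ x₀ 1 = 0 := by
    have e := hU (x₀+1) 1
    rw [qwalk1, hgt (x₀+1) (by omega)] at e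
    have hx : x₀ + 1 - 1 = x₀ := by ring
    rw [hx] at e
    simp only [Matrix.mulVec, dotProduct, Fin.sum_univ_two, mul_zero, Pi.zero_apply] at e
    rw [h1] at e
    simp only [mul_zero, zero_add] at e
    rcases mul_eq_zero.mp e with h | h
    · exact absurd h (hd22 x₀)
    · exact h
  apply hx₀ne
  funext i
  fin_cases i
  · exact h1
  · exact h2

lemma exists_eigen (μ : ℂ) (hμ : μ ∈ spectrum ℂ (Vc C m)) :
    ∃ v : EJ m, v ≠ 0 ∧ Vc C m v = μ • v := by
  by_contra h
  push_neg at h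
  set T : EJ m →ₗ[ℂ] EJ m := μ • LinearMap.id - (Vc C m : EJ m →ₗ[ℂ] EJ m) with hTdef
  have hinj : Function.Injective T := by
    rw [← LinearMap.ker_eq_bot]
    rw [LinearMap.ker_eq_bot']
    intro v hv
    by_contra hv0
    apply h v hv0
    have : μ • v - Vc C m v = 0 := by
      have : T v = 0 := hv
      simpa [hTdef, LinearMap.sub_apply, LinearMap.smul_apply] using this
    have := sub_eq_zero.mp this
    exact this.symm
  have hsurj : Function.Surjective T := LinearMap.injective_iff_surjective.mp hinj
  let e := LinearEquiv.ofBijective T ⟨hinj, hsurj⟩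
  let ec := e.toContinuousLinearEquiv
  apply spectrum.mem_iff.mp hμ
  refine ⟨ContinuousLinearEquiv.toUnit ec, ?_⟩
  apply ContinuousLinearMap.ext
  intro v
  show ec v = (algebraMap ℂ (EJ m →L[ℂ] EJ m) μ - Vc C m) v
  have h1 : ec v = T v := rfl
  rw [h1, hTdef]
  simp [Algebra.algebraMap_eq_smul_one]

include hm hCm in
lemma spec_lt (hC : ∀ x, C x ∈ Matrix.unitaryGroup (Fin 2) ℂ)
    (hd22 : ∀ x, C x 1 1 ≠ 0)
    (μ : ℂ) (hμ : μ ∈ spectrum ℂ (Vc C m)) : ‖μ‖ < 1 := by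
  obtain ⟨v, hv0, hvE⟩ := exists_eigen μ hμ
  have hvpos : 0 < ‖v‖ := norm_pos_iff.mpr hv0
  have hle : ‖μ‖ ≤ 1 := by
    have h1 : ‖Vc C m v‖ = ‖μ‖ * ‖v‖ := by rw [hvE, norm_smul]
    have h2 := Vc_contraction hm hC v
    rw [h1] at h2
    by_contra hgt
    push_neg at hgt
    nlinarith
  rcases lt_or_eq_of_le hle with h | h
  · exact h
  exfalso
  -- ‖μ‖ = 1 case
  set φ := extJ m v with hφ
  have hVnorm : ‖Vc C m v‖^2 = ‖v‖^2 := by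
    rw [hvE, norm_smul, h, one_mul]
  have hcons := Vc_normsq hm hC v
  have p1 := nsq_nonneg (qwalk C φ) (-m-1)
  have p2 := nsq_nonneg (qwalk C φ) (m+1)
  have hz1 : nsq (qwalk C φ) (-m-1) = 0 := by rw [hφ]; nlinarith
  have hz2 : nsq (qwalk C φ) (m+1) = 0 := by rw [hφ]; nlinarith
  have hq1 : qwalk C φ (-m-1) = 0 := by
    have e := hz1
    rw [nsq] at e
    have a1 : ‖qwalk C φ (-m-1) 0‖ = 0 := by nlinarith [sq_nonneg ‖qwalk C φ (-m-1) 0‖, sq_nonneg ‖qwalk C φ (-m-1) 1‖, norm_nonneg (qwalk C φ (-m-1) 0), norm_nonneg (qwalk C φ (-m-1) 1)]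
    have a2 : ‖qwalk C φ (-m-1) 1‖ = 0 := by nlinarith [sq_nonneg ‖qwalk C φ (-m-1) 0‖, sq_nonneg ‖qwalk C φ (-m-1) 1‖, norm_nonneg (qwalk C φ (-m-1) 0), norm_nonneg (qwalk C φ (-m-1) 1)]
    funext i
    fin_cases i
    · exact norm_eq_zero.mp a1
    · exact norm_eq_zero.mp a2
  have hq2 : qwalk C φ (m+1) = 0 := by
    have e := hz2
    rw [nsq] at e
    have a1 : ‖qwalk C φ (m+1) 0‖ = 0 := by nlinarith [sq_nonneg ‖qwalk C φ (m+1) 0‖, sq_nonneg ‖qwalk C φ (m+1) 1‖, norm_nonneg (qwalk C φ (m+1) 0), norm_nonneg (qwalk C φ (m+1) 1)]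
    have a2 : ‖qwalk C φ (m+1) 1‖ = 0 := by nlinarith [sq_nonneg ‖qwalk C φ (m+1) 0‖, sq_nonneg ‖qwalk C φ (m+1) 1‖, norm_nonneg (qwalk C φ (m+1) 0), norm_nonneg (qwalk C φ (m+1) 1)]
    funext i
    fin_cases i
    · exact norm_eq_zero.mp a1
    · exact norm_eq_zero.mp a2
  have hU : ∀ x i, qwalk C φ x i = μ * φ x i := by
    intro x i
    by_cases hx : x ∈ Finset.Ioc (-m-1) m
    · have hres : qwalk C φ x i = (Vc C m v) (⟨x, hx⟩, i) := by
        rw [Vc_apply]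
        rfl
      rw [hres, hvE]
      show μ * v (⟨x, hx⟩, i) = μ * φ x i
      congr 1
      rw [hφ, extJ, dif_pos hx]
    · have hφx : φ x = 0 := extJ_zero_of m v x hx
      rw [hφx]
      show qwalk C φ x i = μ * 0
      rw [mul_zero]
      by_cases hxr : x = m + 1
      · rw [hxr]
        rw [show qwalk C φ (m+1) i = 0 from by rw [hq2]; rfl]
      by_cases hxl : x = -m-1
      · rw [hxl]
        rw [show qwalk C φ (-m-1) i = 0 from by rw [hq1]; rfl]
      have : qwalk C φ x = 0 := by
        rw [Finset.mem_Ioc] at hx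
        apply qwalk_zero_of
        · apply extJ_zero_of
          rw [Finset.mem_Ioc]
          omega
        · apply extJ_zero_of
          rw [Finset.mem_Ioc]
          omega
      rw [this]
      rfl
  have hμ0 : μ ≠ 0 := by
    intro hh
    rw [hh] at h
    simp at h
  have hkill := eig_kill hd22 φ (extJ_finsupp m v) μ hμ0 hU
  apply hv0
  rw [← resJ_extJ m v]
  ext p
  show extJ m v p.1.1 p.2 = 0
  rw [show extJ m v p.1.1 = 0 from hkill p.1.1]
  rfl

end Part8

section Part9
set_option linter.unusedSectionVars false
set_option maxHeartbeats 1000000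
set_option synthInstance.maxHeartbeats 400000
open QW Finset Filter ENNReal

variable {C : ℤ → Matrix (Fin 2) (Fin 2) ℂ} {m : ℤ} {ψ : QWState}
variable (hm : 1 ≤ m) (hCm : ∀ x : ℤ, m ≤ |x| → C x = 1)
variable (hψm : ∀ x : ℤ, m ≤ |x| → ψ x = 0)

include hm in
lemma EJ_nontrivial : Nontrivial (EJ m) := by
  have hmem : (m, (0 : Fin 2)).1 ∈ Finset.Ioc (-m-1) m := by
    rw [Finset.mem_Ioc]; omega
  refine ⟨EuclideanSpace.single (⟨⟨m, hmem⟩, 0⟩ : ↥(Finset.Ioc (-m-1) m) × Fin 2) (1:ℂ), 0, ?_⟩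
  intro h
  have := congrArg (fun w : EJ m => w (⟨⟨m, hmem⟩, 0⟩ : ↥(Finset.Ioc (-m-1) m) × Fin 2)) h
  dsimp only at this
  rw [EuclideanSpace.single_apply] at this
  simp at this

include hm hCm in
lemma rad_lt_one (hC : ∀ x, C x ∈ Matrix.unitaryGroup (Fin 2) ℂ)
    (hd22 : ∀ x, C x 1 1 ≠ 0) :
    spectralRadius ℂ (Vc C m) < 1 := by
  haveI := EJ_nontrivial hm
  obtain ⟨μ, hμmem, hμeq⟩ := spectrum.exists_nnnorm_eq_spectralRadius (a := Vc C m)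
  rw [← hμeq]
  have := spec_lt hm hCm hC hd22 μ hμmem
  rw [show (1 : ℝ≥0∞) = ((1:NNReal) : ℝ≥0∞) from rfl, ENNReal.coe_lt_coe]
  rwa [← NNReal.coe_lt_coe, coe_nnnorm, NNReal.coe_one]

include hm hCm in
lemma norm_pow_tendsto (hC : ∀ x, C x ∈ Matrix.unitaryGroup (Fin 2) ℂ)
    (hd22 : ∀ x, C x 1 1 ≠ 0) :
    Tendsto (fun n : ℕ => ‖(Vc C m) ^ n‖) atTop (nhds 0) := by
  have hrad := rad_lt_one hm hCm hC hd22
  obtain ⟨ρ, hρ1, hρ2⟩ := exists_between hrad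
  have hρtop : ρ ≠ ⊤ := by
    intro h; rw [h] at hρ2; exact absurd hρ2 (by simp)
  have gelfand := spectrum.pow_nnnorm_pow_one_div_tendsto_nhds_spectralRadius (Vc C m)
  have hev : ∀ᶠ n : ℕ in atTop, (‖(Vc C m) ^ n‖₊ : ℝ≥0∞) ^ (1/(n:ℝ)) < ρ :=
    gelfand.eventually_lt_const hρ1
  have hbound : ∀ᶠ n : ℕ in atTop, ‖(Vc C m) ^ n‖ ≤ ρ.toReal ^ n := by
    filter_upwards [hev, eventually_ge_atTop 1] with n hn hn1
    have hne : (n:ℝ) ≠ 0 := by positivity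
    have h1 : ((‖(Vc C m) ^ n‖₊ : ℝ≥0∞) ^ (1/(n:ℝ))) ^ (n:ℝ) ≤ ρ ^ (n:ℝ) :=
      ENNReal.rpow_le_rpow (le_of_lt hn) (by positivity)
    rw [← ENNReal.rpow_mul, one_div, inv_mul_cancel₀ hne, ENNReal.rpow_one] at h1
    have h2 : (‖(Vc C m) ^ n‖₊ : ℝ≥0∞) ≤ ρ ^ n := by
      rwa [ENNReal.rpow_natCast] at h1
    have h3 := ENNReal.toReal_mono (by simp [hρtop]) h2
    rw [ENNReal.toReal_pow] at h3
    simpa using h3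
  apply squeeze_zero' (Filter.Eventually.of_forall (fun n => norm_nonneg _)) hbound
  apply tendsto_pow_atTop_nhds_zero_of_lt_one ENNReal.toReal_nonneg
  have : ρ.toReal < (1:ℝ≥0∞).toReal := by
    apply ENNReal.toReal_strict_mono (by simp) hρ2
  simpa using this

include hm hCm hψm in
lemma aa_tendsto (hC : ∀ x, C x ∈ Matrix.unitaryGroup (Fin 2) ℂ)
    (hd22 : ∀ x, C x 1 1 ≠ 0) :
    Tendsto (aa C ψ m) atTop (nhds 0) := by
  have hb : ∀ n : ℕ, aa C ψ m n ≤ (‖(Vc C m) ^ n‖ * ‖resJ m ψ‖)^2 := by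
    intro n
    rw [aa_eq_norm hm hCm hψm n]
    have h1 : ‖((Vc C m) ^ n) (resJ m ψ)‖ ≤ ‖(Vc C m) ^ n‖ * ‖resJ m ψ‖ :=
      ContinuousLinearMap.le_opNorm _ _
    nlinarith [norm_nonneg (((Vc C m) ^ n) (resJ m ψ)), norm_nonneg ((Vc C m) ^ n),
      norm_nonneg (resJ m ψ)]
  have hg : Tendsto (fun n : ℕ => (‖(Vc C m) ^ n‖ * ‖resJ m ψ‖)^2) atTop (nhds 0) := by
    have h1 := (norm_pow_tendsto hm hCm hC hd22).mul_const ‖resJ m ψ‖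
    rw [zero_mul] at h1
    have h2 := h1.pow 2
    simpa using h2
  exact squeeze_zero (fun n => aa_nonneg n) hb hg

end Part9

set_option linter.unusedSectionVars false
set_option maxHeartbeats 2000000
set_option synthInstance.maxHeartbeats 400000
open QW Finset

/-- Weak limit of X_n/n: for a compactly supported normalized initial state, the position
distribution concentrates linearly at speed ±1, with limiting weights c₊, c₋ ≥ 0,
c₊ + c₋ = 1. -/
theorem weak_limit_velocity
    (C : ℤ → Matrix (Fin 2) (Fin 2) ℂ) (hC : CoinAssumption C)
    (ψ : QWState) (hψfin : Set.Finite {x : ℤ | ψ x ≠ 0})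
    (hnorm : ∑' x : ℤ, (‖ψ x 0‖ ^ 2 + ‖ψ x 1‖ ^ 2) = 1) :
    ∃ cp cm : ℝ, 0 ≤ cp ∧ 0 ≤ cm ∧ cp + cm = 1 ∧
      ∀ ε : ℝ, 0 < ε → ε < 1 →
        (Tendsto (fun n : ℕ =>
            ∑' x : {x : ℤ // |(x : ℝ)| ≤ (1 - ε) * n},
              (‖(qwalk C)^[n] ψ x.1 0‖ ^ 2 + ‖(qwalk C)^[n] ψ x.1 1‖ ^ 2))
          atTop (nhds 0)) ∧
        (Tendsto (fun n : ℕ =>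
            ∑' x : {x : ℤ // (1 - ε) * n ≤ (x : ℝ)},
              (‖(qwalk C)^[n] ψ x.1 0‖ ^ 2 + ‖(qwalk C)^[n] ψ x.1 1‖ ^ 2))
          atTop (nhds cp)) ∧
        (Tendsto (fun n : ℕ =>
            ∑' x : {x : ℤ // (x : ℝ) ≤ -((1 - ε) * n)},
              (‖(qwalk C)^[n] ψ x.1 0‖ ^ 2 + ‖(qwalk C)^[n] ψ x.1 1‖ ^ 2))
          atTop (nhds cm)) := by
  classical
  -- choose the box size m
  set S : Finset ℤ := hC.fin.toFinset ∪ hψfin.toFinset with hS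
  set m : ℤ := 1 + ∑ x ∈ S, |x| with hmdef
  have habs : ∀ x ∈ S, |x| ≤ ∑ y ∈ S, |y| :=
    fun x hx => Finset.single_le_sum (fun y _ => abs_nonneg y) hx
  have hsum0 : 0 ≤ ∑ y ∈ S, |y| := Finset.sum_nonneg (fun y _ => abs_nonneg y)
  have hm : 1 ≤ m := by omega
  have hnotS : ∀ x : ℤ, m ≤ |x| → x ∉ S := by
    intro x hx hmem
    have := habs x hmem
    omega
  have hCm : ∀ x : ℤ, m ≤ |x| → C x = 1 := by
    intro x hx
    by_contra hne
    exact hnotS x hx (Finset.mem_union_left _ (by rw [Set.Finite.mem_toFinset]; exact hne))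
  have hψm : ∀ x : ℤ, m ≤ |x| → ψ x = 0 := by
    intro x hx
    by_contra hne
    exact hnotS x hx (Finset.mem_union_right _ (by rw [Set.Finite.mem_toFinset]; exact hne))
  have hU := hC.unitary
  have hd22 := hC.d22
  have hnorm' : ∑' x : ℤ, nsq ψ x = 1 := hnorm
  -- limits cp, cm
  have hbddR : BddAbove (Set.range (Rr C ψ m)) := by
    refine ⟨1, ?_⟩
    rintro y ⟨n, rfl⟩
    exact Rr_le_one hm hCm hψm hU hnorm' n
  have hbddL : BddAbove (Set.range (Ll C ψ m)) := by
    refine ⟨1, ?_⟩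
    rintro y ⟨n, rfl⟩
    exact Ll_le_one hm hCm hψm hU hnorm' n
  set cp : ℝ := ⨆ n, Rr C ψ m n with hcp
  set cm : ℝ := ⨆ n, Ll C ψ m n with hcm
  have hRtend : Tendsto (Rr C ψ m) atTop (nhds cp) :=
    tendsto_atTop_ciSup (Rr_mono hm hCm hψm) hbddR
  have hLtend : Tendsto (Ll C ψ m) atTop (nhds cm) :=
    tendsto_atTop_ciSup (Ll_mono hm hCm hψm) hbddL
  have hatend := aa_tendsto hm hCm hψm hU hd22
  have hcp0 : 0 ≤ cp := le_trans (Rr_nonneg 0) (le_ciSup hbddR 0)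
  have hcm0 : 0 ≤ cm := le_trans (Ll_nonneg 0) (le_ciSup hbddL 0)
  have hcpcm : cp + cm = 1 := by
    have h1 : Tendsto (fun n => Ll C ψ m n + aa C ψ m n + Rr C ψ m n) atTop
        (nhds (cm + 0 + cp)) := (hLtend.add hatend).add hRtend
    have h2 : (fun n => Ll C ψ m n + aa C ψ m n + Rr C ψ m n) = fun _ => 1 :=
      funext (fun n => split_total hm hCm hψm hU hnorm' n)
    rw [h2] at h1
    have := tendsto_nhds_unique h1 tendsto_const_nhds
    linarith
  refine ⟨cp, cm, hcp0, hcm0, hcpcm, ?_⟩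
  intro ε hε0 hε1
  -- the cutoff sequence
  set L : ℕ → ℕ := fun n => min ⌈ε*(n:ℝ)⌉₊ n with hLdef
  have hLtop : Tendsto L atTop atTop := by
    rw [tendsto_atTop]
    intro b
    have h1 : Tendsto (fun n : ℕ => ε * (n:ℝ)) atTop atTop :=
      (tendsto_natCast_atTop_atTop (R := ℝ)).const_mul_atTop hε0
    filter_upwards [eventually_ge_atTop b, h1.eventually_ge_atTop (b:ℝ)] with n hn1 hn2
    have : (b:ℝ) ≤ (⌈ε*(n:ℝ)⌉₊ : ℝ) := le_trans hn2 (Nat.le_ceil _)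
    have hb1 : b ≤ ⌈ε*(n:ℝ)⌉₊ := by exact_mod_cast this
    exact le_min hb1 hn1
  have hdiffR : Tendsto (fun n => Rr C ψ m n - Rr C ψ m (L n)) atTop (nhds 0) := by
    have := hRtend.sub (hRtend.comp hLtop)
    rw [sub_self] at this
    exact this
  have hdiffL : Tendsto (fun n => Ll C ψ m n - Ll C ψ m (L n)) atTop (nhds 0) := by
    have := hLtend.sub (hLtend.comp hLtop)
    rw [sub_self] at this
    exact this
  have hNbig : ∀ᶠ n : ℕ in atTop, (m:ℝ) < (1-ε)*(n:ℝ) :=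
    ((tendsto_natCast_atTop_atTop (R := ℝ)).const_mul_atTop
      (by linarith : (0:ℝ) < 1-ε)).eventually_gt_atTop (m:ℝ)
  have hsupp : ∀ n : ℕ, ∀ x : ℤ, x ∉ Finset.Ioc (-(m+(n:ℤ))-1) (m+(n:ℤ)) →
      nsq ((qwalk C)^[n] ψ) x = 0 := by
    intro n x hx
    apply nsq_eq_zero
    by_contra h
    have := iter_supp hψm n x h
    rw [Finset.mem_Ioc] at hx
    omega
  -- RIGHT tail
  have key2 : Tendsto (fun n : ℕ => ∑' x : {x : ℤ // (1-ε)*(n:ℝ) ≤ (x:ℝ)},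
      nsq ((qwalk C)^[n] ψ) x.1) atTop (nhds cp) := by
    set W : ℕ → ℝ := fun n => ∑ x ∈ (Finset.Ioc m (m+(n:ℤ))).filter
      (fun x : ℤ => ¬((1-ε)*(n:ℝ) ≤ (x:ℝ))), nsq ((qwalk C)^[n] ψ) x with hWdef
    have hW0 : ∀ n, 0 ≤ W n := fun n => Finset.sum_nonneg (fun x _ => nsq_nonneg _ x)
    have hWb : ∀ n, W n ≤ Rr C ψ m n - Rr C ψ m (L n) := by
      intro n
      apply key_bound_right hm hCm hψm hε0 n
      intro x hx
      rw [Finset.mem_filter, Finset.mem_Ioc] at hx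
      exact ⟨hx.1.1, hx.1.2, le_of_lt (lt_of_not_ge hx.2)⟩
    have hWtend : Tendsto W atTop (nhds 0) := squeeze_zero hW0 hWb hdiffR
    have hlim : Tendsto (fun n => Rr C ψ m n - W n) atTop (nhds cp) := by
      have := hRtend.sub hWtend
      rw [sub_zero] at this
      exact this
    apply Tendsto.congr' _ hlim
    filter_upwards [hNbig] with n hn
    have e1 : (∑' x : {x : ℤ // (1-ε)*(n:ℝ) ≤ (x:ℝ)}, nsq ((qwalk C)^[n] ψ) x.1)
        = ∑ x ∈ (Finset.Ioc (-(m+(n:ℤ))-1) (m+(n:ℤ))).filter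
            (fun x : ℤ => (1-ε)*(n:ℝ) ≤ (x:ℝ)), nsq ((qwalk C)^[n] ψ) x :=
      tsum_subtype_eq_filter _ _ _ (hsupp n)
    have e2 : (Finset.Ioc (-(m+(n:ℤ))-1) (m+(n:ℤ))).filter
          (fun x : ℤ => (1-ε)*(n:ℝ) ≤ (x:ℝ))
        = (Finset.Ioc m (m+(n:ℤ))).filter (fun x : ℤ => (1-ε)*(n:ℝ) ≤ (x:ℝ)) := by
      ext x
      simp only [Finset.mem_filter, Finset.mem_Ioc]
      constructor
      · rintro ⟨⟨h1, h2⟩, h3⟩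
        refine ⟨⟨?_, h2⟩, h3⟩
        have : (m:ℝ) < (x:ℝ) := lt_of_lt_of_le hn h3
        exact_mod_cast this
      · rintro ⟨⟨h1, h2⟩, h3⟩
        exact ⟨⟨by omega, h2⟩, h3⟩
    have e3 := Finset.sum_filter_add_sum_filter_not (Finset.Ioc m (m+(n:ℤ)))
      (fun x : ℤ => (1-ε)*(n:ℝ) ≤ (x:ℝ)) (fun x => nsq ((qwalk C)^[n] ψ) x)
    show Rr C ψ m n - W n = _
    rw [e1, e2]
    rw [Rr] at *
    linarith [e3]
  -- LEFT tail
  have key3 : Tendsto (fun n : ℕ => ∑' x : {x : ℤ // (x:ℝ) ≤ -((1-ε)*(n:ℝ))},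
      nsq ((qwalk C)^[n] ψ) x.1) atTop (nhds cm) := by
    set W : ℕ → ℝ := fun n => ∑ x ∈ (Finset.Ioc (-(m+(n:ℤ))-1) (-m-1)).filter
      (fun x : ℤ => ¬((x:ℝ) ≤ -((1-ε)*(n:ℝ)))), nsq ((qwalk C)^[n] ψ) x with hWdef
    have hW0 : ∀ n, 0 ≤ W n := fun n => Finset.sum_nonneg (fun x _ => nsq_nonneg _ x)
    have hWb : ∀ n, W n ≤ Ll C ψ m n - Ll C ψ m (L n) := by
      intro n
      apply key_bound_left hm hCm hψm hε0 n
      intro x hx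
      rw [Finset.mem_filter, Finset.mem_Ioc] at hx
      refine ⟨by omega, by omega, le_of_lt (lt_of_not_ge hx.2)⟩
    have hWtend : Tendsto W atTop (nhds 0) := squeeze_zero hW0 hWb hdiffL
    have hlim : Tendsto (fun n => Ll C ψ m n - W n) atTop (nhds cm) := by
      have := hLtend.sub hWtend
      rw [sub_zero] at this
      exact this
    apply Tendsto.congr' _ hlim
    filter_upwards [hNbig] with n hn
    have e1 : (∑' x : {x : ℤ // (x:ℝ) ≤ -((1-ε)*(n:ℝ))}, nsq ((qwalk C)^[n] ψ) x.1)
        = ∑ x ∈ (Finset.Ioc (-(m+(n:ℤ))-1) (m+(n:ℤ))).filter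
            (fun x : ℤ => (x:ℝ) ≤ -((1-ε)*(n:ℝ))), nsq ((qwalk C)^[n] ψ) x :=
      tsum_subtype_eq_filter _ _ _ (hsupp n)
    have e2 : (Finset.Ioc (-(m+(n:ℤ))-1) (m+(n:ℤ))).filter
          (fun x : ℤ => (x:ℝ) ≤ -((1-ε)*(n:ℝ)))
        = (Finset.Ioc (-(m+(n:ℤ))-1) (-m-1)).filter
            (fun x : ℤ => (x:ℝ) ≤ -((1-ε)*(n:ℝ))) := by
      ext x
      simp only [Finset.mem_filter, Finset.mem_Ioc]
      constructor
      · rintro ⟨⟨h1, h2⟩, h3⟩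
        refine ⟨⟨h1, ?_⟩, h3⟩
        have : (x:ℝ) < -(m:ℝ) := lt_of_le_of_lt h3 (by linarith)
        have : x < -m := by exact_mod_cast this
        omega
      · rintro ⟨⟨h1, h2⟩, h3⟩
        exact ⟨⟨h1, by omega⟩, h3⟩
    have e3 := Finset.sum_filter_add_sum_filter_not (Finset.Ioc (-(m+(n:ℤ))-1) (-m-1))
      (fun x : ℤ => (x:ℝ) ≤ -((1-ε)*(n:ℝ))) (fun x => nsq ((qwalk C)^[n] ψ) x)
    show Ll C ψ m n - W n = _
    rw [e1, e2]
    rw [Ll] at *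
    linarith [e3]
  -- MIDDLE
  have key1 : Tendsto (fun n : ℕ => ∑' x : {x : ℤ // |(x:ℝ)| ≤ (1-ε)*(n:ℝ)},
      nsq ((qwalk C)^[n] ψ) x.1) atTop (nhds 0) := by
    set G : ℕ → ℝ := fun n => ∑' x : {x : ℤ // |(x:ℝ)| ≤ (1-ε)*(n:ℝ)},
      nsq ((qwalk C)^[n] ψ) x.1 with hGdef
    have hG0 : ∀ n, 0 ≤ G n := fun n => tsum_nonneg (fun x => nsq_nonneg _ x.1)
    have hGb : ∀ n, G n ≤ aa C ψ m n + (Rr C ψ m n - Rr C ψ m (L n))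
        + (Ll C ψ m n - Ll C ψ m (L n)) := by
      intro n
      have e1 : G n = ∑ x ∈ (Finset.Ioc (-(m+(n:ℤ))-1) (m+(n:ℤ))).filter
          (fun x : ℤ => |(x:ℝ)| ≤ (1-ε)*(n:ℝ)), nsq ((qwalk C)^[n] ψ) x :=
        tsum_subtype_eq_filter _ _ _ (hsupp n)
      set BR : Finset ℤ := (Finset.Ioc m (m+(n:ℤ))).filter
        (fun x : ℤ => (x:ℝ) ≤ (1-ε)*(n:ℝ)) with hBR
      set BL : Finset ℤ := (Finset.Ioc (-(m+(n:ℤ))-1) (-m-1)).filter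
        (fun x : ℤ => -((1-ε)*(n:ℝ)) ≤ (x:ℝ)) with hBL
      set BM : Finset ℤ := Finset.Ioc (-m-1) m with hBM
      have hsub : (Finset.Ioc (-(m+(n:ℤ))-1) (m+(n:ℤ))).filter
          (fun x : ℤ => |(x:ℝ)| ≤ (1-ε)*(n:ℝ)) ⊆ BM ∪ BR ∪ BL := by
        intro x hx
        rw [Finset.mem_filter, Finset.mem_Ioc] at hx
        obtain ⟨⟨h1, h2⟩, h3⟩ := hx
        rw [abs_le] at h3
        rcases lt_trichotomy x m with hlt | heq | hgt
        · by_cases hxm : -m-1 < x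
          · exact Finset.mem_union_left _ (Finset.mem_union_left _
              (by rw [hBM, Finset.mem_Ioc]; omega))
          · refine Finset.mem_union_right _ ?_
            rw [hBL, Finset.mem_filter, Finset.mem_Ioc]
            exact ⟨⟨h1, by omega⟩, h3.1⟩
        · exact Finset.mem_union_left _ (Finset.mem_union_left _
            (by rw [hBM, Finset.mem_Ioc]; omega))
        · refine Finset.mem_union_left _ (Finset.mem_union_right _ ?_)
          rw [hBR, Finset.mem_filter, Finset.mem_Ioc]
          exact ⟨⟨hgt, h2⟩, h3.2⟩
      have hd1 : Disjoint (BM ∪ BR) BL := by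
        rw [Finset.disjoint_left]
        intro x hx hx'
        rw [hBL, Finset.mem_filter, Finset.mem_Ioc] at hx'
        rcases Finset.mem_union.mp hx with h | h
        · rw [hBM, Finset.mem_Ioc] at h; omega
        · rw [hBR, Finset.mem_filter, Finset.mem_Ioc] at h; omega
      have hd2 : Disjoint BM BR := by
        rw [Finset.disjoint_left]
        intro x hx hx'
        rw [hBM, Finset.mem_Ioc] at hx
        rw [hBR, Finset.mem_filter, Finset.mem_Ioc] at hx'
        omega
      have hle1 : G n ≤ ∑ x ∈ BM ∪ BR ∪ BL, nsq ((qwalk C)^[n] ψ) x := by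
        rw [e1]
        exact Finset.sum_le_sum_of_subset_of_nonneg hsub (fun x _ _ => nsq_nonneg _ x)
      rw [Finset.sum_union hd1, Finset.sum_union hd2] at hle1
      have hR : ∑ x ∈ BR, nsq ((qwalk C)^[n] ψ) x ≤ Rr C ψ m n - Rr C ψ m (L n) := by
        apply key_bound_right hm hCm hψm hε0 n
        intro x hx
        rw [hBR, Finset.mem_filter, Finset.mem_Ioc] at hx
        exact ⟨hx.1.1, hx.1.2, hx.2⟩
      have hL : ∑ x ∈ BL, nsq ((qwalk C)^[n] ψ) x ≤ Ll C ψ m n - Ll C ψ m (L n) := by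
        apply key_bound_left hm hCm hψm hε0 n
        intro x hx
        rw [hBL, Finset.mem_filter, Finset.mem_Ioc] at hx
        exact ⟨by omega, by omega, hx.2⟩
      have hM : ∑ x ∈ BM, nsq ((qwalk C)^[n] ψ) x = aa C ψ m n := rfl
      linarith
    have hrhs : Tendsto (fun n => aa C ψ m n + (Rr C ψ m n - Rr C ψ m (L n))
        + (Ll C ψ m n - Ll C ψ m (L n))) atTop (nhds 0) := by
      have := (hatend.add hdiffR).add hdiffL
      simpa using this
    exact squeeze_zero hG0 hGb hrhs
  exact ⟨key1, key2, key3⟩
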